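/- Fix distinct indices j, k ∈ {1,…,n}. The one-variable function F(x) = c_{m−1}/(m·λ_k) − (|g|/(m·λ_k))·( λ_k^m/(x^m − λ_k^m) + Σ_{ℓ≠j,k} λ_k^m/(λ_ℓ^m − λ_k^m) ) (i.e. f_k regarded as a function of λ_j, all other λ's fixed) is differentiable at x = λ_j with derivative F′(λ_j) = |g|·(λ_j·λ_k)^{m−1}/(λ_j^m − λ_k^m)^2. Since this expression is symmetric under interchanging j and k, the partial derivatives satisfy ∂f_k/∂λ_j = ∂f_j/∂λ_k. -/

import Mathlib

open BigOperators

noncomputable section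

/-- `|g| = g₀ + g₁ + ⋯ + g_{m-1}`. -/
def gAbs (m : ℕ) (g : ZMod m → ℂ) : ℂ :=
  ∑ s ∈ Finset.range m, g (s : ZMod m)

/-- `cᵢ = Σ_{r=0}^{i} g_r − Σ_{s=0}^{m−1} ((m−s)/m)·g_s`, the index `i` read modulo `m`. -/
def cConst (m : ℕ) (g : ZMod m → ℂ) (i : ZMod m) : ℂ :=
  (∑ r ∈ Finset.range (i.val + 1), g (r : ZMod m)) -
    ∑ s ∈ Finset.range m, (((m : ℂ) - (s : ℂ)) / (m : ℂ)) * g (s : ZMod m)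

/-- Auxiliary derivative computation. -/
lemma aux_hasDerivAt (m : ℕ) (hm : m ≠ 0) (G A B C1 S x : ℂ) (hx : x ≠ 0) (hB : B ≠ 0)
    (hden : x ^ m - A ≠ 0) :
    HasDerivAt (fun y : ℂ => C1 / ((m : ℂ) * B) -
        G / ((m : ℂ) * B) * (A / (y ^ m - A) + S))
      (G * A * (m : ℂ) * x ^ (m - 1) / ((m : ℂ) * B * (x ^ m - A) ^ 2)) x := by
  have h1 : HasDerivAt (fun y : ℂ => y ^ m - A) ((m : ℂ) * x ^ (m - 1)) x :=
    (hasDerivAt_pow m x).sub_const A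
  have h3 := (hasDerivAt_const x A).div h1 hden
  have h4 := ((h3.add_const S).const_mul (G / ((m : ℂ) * B))).const_sub (C1 / ((m : ℂ) * B))
  refine h4.congr_deriv ?_
  have hm' : (m : ℂ) ≠ 0 := Nat.cast_ne_zero.mpr hm
  field_simp
  ring

theorem spinless_f_symmetry (m n : ℕ) [NeZero m] (hn : 0 < n)
    (lam : Fin n → ℂ) (g : ZMod m → ℂ)
    (hlam : ∀ j, lam j ≠ 0)
    (hsep : ∀ a b : Fin n, a ≠ b → lam a ^ m ≠ lam b ^ m)
    (j k : Fin n) (hjk : j ≠ k) :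
    HasDerivAt (fun x : ℂ =>
        cConst m g ((m : ZMod m) - 1) / ((m : ℂ) * lam k) -
          gAbs m g / ((m : ℂ) * lam k) *
            (lam k ^ m / (x ^ m - lam k ^ m) +
              ∑ l ∈ (Finset.univ.erase k).erase j, lam k ^ m / (lam l ^ m - lam k ^ m)))
      (gAbs m g * (lam j * lam k) ^ (m - 1) / (lam j ^ m - lam k ^ m) ^ 2) (lam j) ∧
    deriv (fun x : ℂ =>
        cConst m g ((m : ZMod m) - 1) / ((m : ℂ) * lam k) -
          gAbs m g / ((m : ℂ) * lam k) *
            (lam k ^ m / (x ^ m - lam k ^ m) +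
              ∑ l ∈ (Finset.univ.erase k).erase j, lam k ^ m / (lam l ^ m - lam k ^ m)))
      (lam j) =
    deriv (fun x : ℂ =>
        cConst m g ((m : ZMod m) - 1) / ((m : ℂ) * lam j) -
          gAbs m g / ((m : ℂ) * lam j) *
            (lam j ^ m / (x ^ m - lam j ^ m) +
              ∑ l ∈ (Finset.univ.erase j).erase k, lam j ^ m / (lam l ^ m - lam j ^ m)))
      (lam k) := by
  have hm : m ≠ 0 := NeZero.ne m
  have hm' : (m : ℂ) ≠ 0 := Nat.cast_ne_zero.mpr hm
  have hdjk : lam j ^ m - lam k ^ m ≠ 0 := sub_ne_zero.mpr (hsep j k hjk)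
  have hdkj : lam k ^ m - lam j ^ m ≠ 0 := sub_ne_zero.mpr (hsep k j hjk.symm)
  have key : ∀ a b : Fin n, lam a ^ m - lam b ^ m ≠ 0 →
      HasDerivAt (fun x : ℂ =>
        cConst m g ((m : ZMod m) - 1) / ((m : ℂ) * lam b) -
          gAbs m g / ((m : ℂ) * lam b) *
            (lam b ^ m / (x ^ m - lam b ^ m) +
              ∑ l ∈ (Finset.univ.erase b).erase a, lam b ^ m / (lam l ^ m - lam b ^ m)))
      (gAbs m g * (lam a * lam b) ^ (m - 1) / (lam a ^ m - lam b ^ m) ^ 2) (lam a) := by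
    intro a b hd
    have h := aux_hasDerivAt m hm (gAbs m g) (lam b ^ m)
      (lam b) (cConst m g ((m : ZMod m) - 1))
      (∑ l ∈ (Finset.univ.erase b).erase a, lam b ^ m / (lam l ^ m - lam b ^ m))
      (lam a) (hlam a) (hlam b) hd
    convert h using 1
    have hb : lam b ^ m = lam b ^ (m - 1) * lam b := by
      rw [← pow_succ, Nat.sub_add_cancel (Nat.one_le_iff_ne_zero.mpr hm)]
    have hne : (lam a ^ m - lam b ^ m) ^ 2 ≠ 0 := pow_ne_zero 2 hd
    have hb' := hlam b
    field_simp
    rw [mul_pow, hb]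
    ring
  refine ⟨key j k hdjk, ?_⟩
  rw [(key j k hdjk).deriv, (key k j hdkj).deriv, mul_comm (lam k) (lam j)]
  rw [show (lam k ^ m - lam j ^ m) ^ 2 = (lam j ^ m - lam k ^ m) ^ 2 by ring]
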